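/- Let G be a simple graph with n ≥ 3 vertices, m edges, all degrees positive, and α real. Then Z_{2α+1}(G) + Z̄_{2α+1}(G) ≥ (n−1)·[ (Z_α(G))²/n + (1/2)(d_j^α − d_k^α)² + (2n/(n−2))·(Z_α(G)/n − (d_j^α + d_k^α)/2)² ] for any distinct vertices v_j, v_k. -/
import Mathlib

open Finset

private lemma key_alg14 (n xj xk T Sg : ℝ) (hn : 3 ≤ n) (hc : T ^ 2 ≤ (n - 2) * Sg) :
    (n - 1) * ((xj + xk + T) ^ 2 / n + (1 / 2) * (xj - xk) ^ 2
      + (2 * n / (n - 2)) * ((xj + xk + T) / n - (xj + xk) / 2) ^ 2)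
      ≤ (n - 1) * (xj ^ 2 + xk ^ 2 + Sg) := by
  have hn0 : (0:ℝ) < n := by linarith
  have hn2 : (0:ℝ) < n - 2 := by linarith
  have hid : (xj + xk + T) ^ 2 / n + (1 / 2) * (xj - xk) ^ 2
      + (2 * n / (n - 2)) * ((xj + xk + T) / n - (xj + xk) / 2) ^ 2
      = xj ^ 2 + xk ^ 2 + T ^ 2 / (n - 2) := by
    field_simp
    ring
  rw [hid]
  have h : T ^ 2 / (n - 2) ≤ Sg := by
    rw [div_le_iff₀ hn2]; linarith
  nlinarith [h]

private lemma coindex_id14 {V : Type*} [Fintype V] [DecidableEq V] (G : SimpleGraph V)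
    [DecidableRel G.Adj]
    (hdeg : ∀ v : V, 0 < G.degree v) (α : ℝ) :
    (∑ v : V, (G.degree v : ℝ) ^ (2 * α + 1))
      + (1 / 2) * ∑ u : V, ∑ v ∈ Finset.univ.filter (fun v => v ≠ u ∧ ¬ G.Adj u v),
          ((G.degree u : ℝ) ^ (2 * α + 1 - 1) + (G.degree v : ℝ) ^ (2 * α + 1 - 1))
      = ((Fintype.card V : ℝ) - 1) * ∑ v : V, ((G.degree v : ℝ) ^ α) ^ 2 := by
  have hd0 : ∀ v : V, (0:ℝ) < (G.degree v : ℝ) := fun v => by exact_mod_cast hdeg v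
  have hsq : ∀ v : V, ((G.degree v : ℝ) ^ α) ^ 2 = (G.degree v : ℝ) ^ (2 * α) := by
    intro v
    rw [← Real.rpow_natCast ((G.degree v : ℝ) ^ α) 2, ← Real.rpow_mul (hd0 v).le]
    norm_num [mul_comm]
  have hexp : 2 * α + 1 - 1 = 2 * α := by ring
  rw [hexp] at *
  have hcard : ∀ u : V, ((Finset.univ.filter (fun v => v ≠ u ∧ ¬ G.Adj u v)).card : ℝ)
      = (Fintype.card V : ℝ) - 1 - (G.degree u : ℝ) := by
    intro u
    have he : Finset.univ.filter (fun v => v ≠ u ∧ ¬ G.Adj u v)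
        = (insert u (G.neighborFinset u))ᶜ := by
      ext v
      simp [SimpleGraph.mem_neighborFinset, not_or]
    rw [he, Finset.card_compl, Finset.card_insert_of_notMem (by simp),
      SimpleGraph.card_neighborFinset_eq_degree]
    have := G.degree_lt_card_verts u
    push_cast [Nat.cast_sub (by omega : G.degree u + 1 ≤ Fintype.card V)]
    ring
  have hswap : ∑ u : V, ∑ v ∈ Finset.univ.filter (fun v => v ≠ u ∧ ¬ G.Adj u v),
        (G.degree v : ℝ) ^ (2 * α)
      = ∑ u : V, ∑ v ∈ Finset.univ.filter (fun v => v ≠ u ∧ ¬ G.Adj u v),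
        (G.degree u : ℝ) ^ (2 * α) := by
    rw [Finset.sum_comm' (s := Finset.univ)
      (t := fun u => Finset.univ.filter (fun v => v ≠ u ∧ ¬ G.Adj u v))
      (s' := fun v => Finset.univ.filter (fun u => u ≠ v ∧ ¬ G.Adj v u))
      (t' := Finset.univ)]
    intro u v
    simp only [Finset.mem_univ, Finset.mem_filter, true_and]
    constructor
    · rintro ⟨hv, hna⟩; exact ⟨⟨Ne.symm hv, fun h => hna (G.adj_symm h)⟩, trivial⟩
    · rintro ⟨⟨hv, hna⟩, _⟩; exact ⟨Ne.symm hv, fun h => hna (G.adj_symm h)⟩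
  have hdsum : ∑ u : V, ∑ v ∈ Finset.univ.filter (fun v => v ≠ u ∧ ¬ G.Adj u v),
        ((G.degree u : ℝ) ^ (2 * α) + (G.degree v : ℝ) ^ (2 * α))
      = 2 * ∑ u : V, ((Fintype.card V : ℝ) - 1 - (G.degree u : ℝ)) * (G.degree u : ℝ) ^ (2 * α) := by
    simp only [Finset.sum_add_distrib]
    rw [hswap]
    simp only [Finset.sum_const, nsmul_eq_mul]
    rw [← Finset.sum_add_distrib]
    rw [Finset.mul_sum]
    refine Finset.sum_congr rfl fun u _ => ?_
    rw [hcard u]; ring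
  rw [hdsum]
  have hpow : ∀ v : V, (G.degree v : ℝ) ^ (2 * α + 1)
      = (G.degree v : ℝ) ^ (2 * α) * (G.degree v : ℝ) :=
    fun v => Real.rpow_add_one (hd0 v).ne' _
  simp only [hpow, hsq]
  rw [Finset.mul_sum, Finset.mul_sum, Finset.mul_sum, ← Finset.sum_add_distrib]
  exact Finset.sum_congr rfl fun u _ => by ring

theorem stmt14 {V : Type*} [Fintype V] [DecidableEq V] (G : SimpleGraph V)
    [DecidableRel G.Adj] (hn : 3 ≤ Fintype.card V)
    (hdeg : ∀ v : V, 0 < G.degree v) (α : ℝ) (j k : V) (hjk : j ≠ k) :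
    (∑ v : V, (G.degree v : ℝ) ^ (2 * α + 1))
      + (1 / 2) * ∑ u : V, ∑ v ∈ Finset.univ.filter (fun v => v ≠ u ∧ ¬ G.Adj u v),
          ((G.degree u : ℝ) ^ (2 * α + 1 - 1) + (G.degree v : ℝ) ^ (2 * α + 1 - 1))
      ≥ ((Fintype.card V : ℝ) - 1) *
          ((∑ v : V, (G.degree v : ℝ) ^ α) ^ 2 / (Fintype.card V : ℝ)
            + (1 / 2) * ((G.degree j : ℝ) ^ α - (G.degree k : ℝ) ^ α) ^ 2
            + (2 * (Fintype.card V : ℝ) / ((Fintype.card V : ℝ) - 2)) *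
                ((∑ v : V, (G.degree v : ℝ) ^ α) / (Fintype.card V : ℝ)
                  - ((G.degree j : ℝ) ^ α + (G.degree k : ℝ) ^ α) / 2) ^ 2) := by
  rw [coindex_id14 G hdeg α]
  set x : V → ℝ := fun v => (G.degree v : ℝ) ^ α with hx
  set s : Finset V := Finset.univ \ {j, k} with hs
  have hsplit : ∀ f : V → ℝ, ∑ v : V, f v = f j + f k + ∑ v ∈ s, f v := by
    intro f
    rw [← Finset.sum_sdiff (Finset.subset_univ ({j, k} : Finset V)),
      Finset.sum_pair hjk]
    ring
  have hcards : (s.card : ℝ) = (Fintype.card V : ℝ) - 2 := by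
    rw [hs, Finset.card_sdiff_of_subset (Finset.subset_univ _), Finset.card_pair hjk]
    have : 2 ≤ Fintype.card V := by omega
    push_cast [Nat.cast_sub this, Finset.card_univ]
    simp [Finset.card_univ]
  have hcauchy : (∑ v ∈ s, x v) ^ 2 ≤ ((Fintype.card V : ℝ) - 2) * ∑ v ∈ s, (x v) ^ 2 := by
    have h := Finset.sum_mul_sq_le_sq_mul_sq s x (fun _ => (1:ℝ))
    simp only [mul_one, one_pow, Finset.sum_const, nsmul_eq_mul] at h
    rw [← hcards]
    calc (∑ v ∈ s, x v) ^ 2 ≤ (∑ v ∈ s, x v ^ 2) * (s.card : ℝ) := h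
      _ = (s.card : ℝ) * ∑ v ∈ s, x v ^ 2 := by ring
  have hn3 : (3:ℝ) ≤ (Fintype.card V : ℝ) := by exact_mod_cast hn
  rw [hsplit x, hsplit (fun v => (x v) ^ 2)]
  exact key_alg14 (Fintype.card V : ℝ) (x j) (x k) (∑ v ∈ s, x v) (∑ v ∈ s, (x v) ^ 2)
    hn3 hcauchy
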